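/- Let f : ℝ^n → ℝ be convex and bounded from below, and let {x_i}_{i≥0} be a proximal sequence for f with parameters {t_i} ⊆ (0,1]. Then: (i) if x_{i+1} ≠ x_i then f(x_{i+1}) < f(x_i); and (ii) x_{i+1} is the shortest-distance projection of x_i onto the sublevel set [f ≤ f(x_{i+1})], i.e., ‖x_{i+1} − x_i‖ ≤ ‖x − x_i‖ for every x ∈ ℝ^n with f(x) ≤ f(x_{i+1}). -/

import Mathlib

open Set Metric

/-- `x` is a *proximal sequence* for `f` with parameters `t` if for every `i`,
`x (i+1)` minimizes `y ↦ f y + ‖y - x i‖² / (2 t i)`. -/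
def IsProximalSeq {n : ℕ} (f : EuclideanSpace ℝ (Fin n) → ℝ) (t : ℕ → ℝ)
    (x : ℕ → EuclideanSpace ℝ (Fin n)) : Prop :=
  ∀ i, ∀ y, f (x (i + 1)) + ‖x (i + 1) - x i‖ ^ 2 / (2 * t i) ≤
    f y + ‖y - x i‖ ^ 2 / (2 * t i)

/-- For a proximal sequence of a convex function bounded from below:
(i) the values `f (x i)` strictly decrease as long as the sequence moves, and
(ii) `x (i+1)` is the shortest-distance projection of `x i` onto the sublevel set
`[f ≤ f (x (i+1))]`. -/
theorem proximal_decrease_and_projection {n : ℕ}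
    (f : EuclideanSpace ℝ (Fin n) → ℝ) (hf : ConvexOn ℝ univ f)
    (hbd : BddBelow (range f))
    (t : ℕ → ℝ) (ht : ∀ i, t i ∈ Ioc (0 : ℝ) 1)
    (x : ℕ → EuclideanSpace ℝ (Fin n)) (hx : IsProximalSeq f t x) :
    (∀ i, x (i + 1) ≠ x i → f (x (i + 1)) < f (x i)) ∧
    (∀ i, ∀ y, f y ≤ f (x (i + 1)) → ‖x (i + 1) - x i‖ ≤ ‖y - x i‖) := by
  constructor
  · intro i hne
    have h := hx i (x i)
    have ht0 : 0 < t i := (ht i).1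
    have hn : 0 < ‖x (i + 1) - x i‖ := norm_pos_iff.mpr (sub_ne_zero.mpr hne)
    have hpos : 0 < ‖x (i + 1) - x i‖ ^ 2 / (2 * t i) :=
      div_pos (pow_pos hn 2) (by linarith)
    simp only [sub_self, norm_zero] at h
    norm_num at h
    linarith
  · intro i y hy
    have ht0 : 0 < t i := (ht i).1
    set u := x (i + 1) - x i with hu
    set v := y - x (i + 1) with hv
    -- key inequality: for all λ ∈ (0,1], 0 ≤ 2⟪u,v⟫ + λ‖v‖²
    have key : ∀ l : ℝ, 0 < l → l ≤ 1 → 0 ≤ 2 * inner ℝ u v + l * ‖v‖ ^ 2 := by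
      intro l hl0 hl1
      have hz : f (x (i + 1) + l • v) ≤ f (x (i + 1)) := by
        have hconv := hf.2 (mem_univ (x (i + 1))) (mem_univ y)
          (by linarith : (0:ℝ) ≤ 1 - l) (le_of_lt hl0) (by ring)
        have heq : (1 - l) • x (i + 1) + l • y = x (i + 1) + l • v := by
          rw [hv]; module
        rw [heq] at hconv
        calc f (x (i + 1) + l • v) ≤ (1 - l) * f (x (i + 1)) + l * f y := hconv
          _ ≤ (1 - l) * f (x (i + 1)) + l * f (x (i + 1)) := by nlinarith
          _ = f (x (i + 1)) := by ring
      have h := hx i (x (i + 1) + l • v)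
      have hnorm : ‖u‖ ^ 2 ≤ ‖x (i + 1) + l • v - x i‖ ^ 2 := by
        have h2t : 0 < 2 * t i := by linarith
        have hd : ‖u‖ ^ 2 / (2 * t i) ≤ ‖x (i + 1) + l • v - x i‖ ^ 2 / (2 * t i) := by
          rw [hu]; linarith
        exact (div_le_div_iff_of_pos_right h2t).mp hd
      have heq2 : x (i + 1) + l • v - x i = u + l • v := by rw [hu]; module
      rw [heq2, norm_add_sq_real] at hnorm
      rw [inner_smul_right, norm_smul, mul_pow] at hnorm
      simp only [Real.norm_eq_abs, abs_of_pos hl0] at hnorm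
      nlinarith
    have hinner : 0 ≤ (inner ℝ u v : ℝ) := by
      by_contra hneg
      push_neg at hneg
      have hv0 : v ≠ 0 := by
        intro h0; rw [h0, inner_zero_right] at hneg; linarith
      have hvn : 0 < ‖v‖ ^ 2 := pow_pos (norm_pos_iff.mpr hv0) 2
      set l := min 1 (-(inner ℝ u v : ℝ) / ‖v‖ ^ 2) with hl
      have hl0 : 0 < l := lt_min one_pos (div_pos (by linarith) hvn)
      have := key l hl0 (min_le_left _ _)
      have hl2 : l ≤ -(inner ℝ u v : ℝ) / ‖v‖ ^ 2 := min_le_right _ _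
      have : l * ‖v‖ ^ 2 ≤ -(inner ℝ u v : ℝ) := by
        calc l * ‖v‖ ^ 2 ≤ (-(inner ℝ u v : ℝ) / ‖v‖ ^ 2) * ‖v‖ ^ 2 := by
              exact mul_le_mul_of_nonneg_right hl2 (le_of_lt hvn)
          _ = -(inner ℝ u v : ℝ) := by field_simp
      linarith
    have hfinal : ‖u‖ ^ 2 ≤ ‖y - x i‖ ^ 2 := by
      have : y - x i = u + v := by rw [hu, hv]; module
      rw [this, norm_add_sq_real]
      nlinarith [sq_nonneg ‖v‖]
    exact (pow_le_pow_iff_left₀ (norm_nonneg _) (norm_nonneg _) two_ne_zero).mp hfinal
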